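/- Let i* < κ and let C ⊆ κ be a set such that |C ∩ A_i| < κ for every i with i* ≤ i < κ. Then there exists a club H ⊆ κ (namely the set of limit ordinals δ closed under the function f(i) = sup(A_i ∩ C) + i + 1) such that F(i,α) ∉ C whenever i* ≤ i < α and i, α ∈ H. -/

import Mathlib

open Set

/-- `Fseq A i α` is `F(i,α)`: the `α`-th element, in increasing order, of the set
`A i \ ⋃ j < i, A j`. -/
noncomputable def Fseq (A : Ordinal → Set Ordinal) (i α : Ordinal) : Ordinal :=
  Ordinal.enumOrd (A i \ ⋃ j < i, A j) α

lemma aux_isRegular_lift {κ : Cardinal.{0}} (hreg : κ.IsRegular) :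
    (Cardinal.lift.{1} κ).IsRegular := by
  constructor
  · simpa using hreg.1
  · rw [← Cardinal.lift_ord, ← Ordinal.lift_cof]
    exact Cardinal.lift_le.2 hreg.2

lemma aux_sSup_lt {κ : Cardinal.{0}} (hreg : κ.IsRegular) {s : Set Ordinal}
    (hsub : s ⊆ Set.Iio κ.ord) (hcard : Cardinal.mk s < Cardinal.lift.{1} κ) :
    sSup s < κ.ord := by
  have hsmall : Small.{0} s := small_subset hsub
  set f : Shrink.{0} s → Ordinal := fun x => ((equivShrink s).symm x : Ordinal) with hf
  have hrange : Set.range f = s := by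
    rw [hf, show (fun x => (((equivShrink s).symm x : s) : Ordinal))
        = Subtype.val ∘ (equivShrink s).symm from rfl,
      Set.range_comp, Equiv.range_eq_univ, Set.image_univ, Subtype.range_val]
  have : sSup s = iSup f := by rw [iSup, hrange]
  rw [this]
  apply Cardinal.iSup_lt_ord_of_isRegular hreg
  · rwa [← Cardinal.lift_lt.{0,1}, Cardinal.lift_mk_shrink'' s]
  · intro i
    exact hsub ((equivShrink s).symm i).2

lemma aux_add_lt {κ : Cardinal.{0}} (hreg : κ.IsRegular) {a b : Ordinal}
    (ha : a < κ.ord) (hb : b < κ.ord) : a + b + 1 < κ.ord := by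
  have hlim : Order.IsSuccLimit κ.ord := Cardinal.isSuccLimit_ord hreg.1
  exact hlim.succ_lt (Ordinal.isPrincipal_add_ord hreg.1 ha hb)

lemma aux_unbounded_of {κ : Cardinal.{0}} (hreg : κ.IsRegular) {X U : Set Ordinal}
    (hXsub : X ⊆ Set.Iio κ.ord) (hXcard : Cardinal.mk X = Cardinal.lift.{1} κ)
    (hU : Cardinal.mk U < Cardinal.lift.{1} κ) :
    ∀ β < κ.ord, ∃ b ∈ X \ U, β < b := by
  intro β hβ
  by_contra h
  push_neg at h
  have hord : Order.IsSuccLimit κ.ord := Cardinal.isSuccLimit_ord hreg.1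
  have hsub : X ⊆ Set.Iio (β + 1) ∪ U := by
    intro b hb
    by_cases hbU : b ∈ U
    · exact Or.inr hbU
    · refine Or.inl ?_
      have := h b ⟨hb, hbU⟩
      exact Order.lt_add_one_iff.2 this
  have h1 : Cardinal.mk (Set.Iio (β + 1) : Set Ordinal) < Cardinal.lift.{1} κ := by
    rw [Ordinal.mk_Iio_ordinal]
    exact Cardinal.lift_lt.2 (Cardinal.lt_ord.1 (by
      rw [Ordinal.add_one_eq_succ]; exact hord.succ_lt hβ))
  have h2 : Cardinal.mk X ≤ Cardinal.mk (Set.Iio (β + 1) : Set Ordinal) + Cardinal.mk U :=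
    (Cardinal.mk_le_mk_of_subset hsub).trans (Cardinal.mk_union_le _ _)
  have h3 : Cardinal.mk (Set.Iio (β + 1) : Set Ordinal) + Cardinal.mk U < Cardinal.lift.{1} κ :=
    Cardinal.add_lt_of_lt (by simpa using hreg.1) h1 hU
  rw [hXcard] at h2
  exact absurd (h2.trans_lt h3) (lt_irrefl _)

lemma aux_enum {κ : Cardinal.{0}} (hreg : κ.IsRegular) {S : Set Ordinal}
    (hsub : S ⊆ Set.Iio κ.ord) (hunb : ∀ β < κ.ord, ∃ b ∈ S, β < b) :
    ∀ α < κ.ord, Ordinal.enumOrd S α ∈ S ∧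
      ∀ c < α, Ordinal.enumOrd S c < Ordinal.enumOrd S α := by
  intro α
  induction α using Ordinal.induction with
  | h α IH =>
  intro hα
  set prev := (fun c => Ordinal.enumOrd S c) '' Set.Iio α with hprev
  have hprevsub : prev ⊆ Set.Iio κ.ord := by
    rintro _ ⟨c, hc, rfl⟩
    exact hsub ((IH c hc (hc.trans hα)).1)
  have hprevcard : Cardinal.mk prev < Cardinal.lift.{1} κ :=
    Cardinal.mk_image_le.trans_lt (by
      rw [Ordinal.mk_Iio_ordinal]
      exact Cardinal.lift_lt.2 (Cardinal.lt_ord.1 hα))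
  obtain ⟨b, hbS, hb⟩ := hunb _ (aux_sSup_lt hreg hprevsub hprevcard)
  have hbdd : BddAbove prev := ⟨κ.ord, fun x hx => (hprevsub hx).le⟩
  have hbmem : b ∈ S ∩ {b | ∀ c, c < α → Ordinal.enumOrd S c < b} :=
    ⟨hbS, fun c hc => lt_of_le_of_lt (le_csSup hbdd ⟨c, hc, rfl⟩) hb⟩
  have hmem : Ordinal.enumOrd S α ∈ S ∩ {b | ∀ c, c < α → Ordinal.enumOrd S c < b} := by
    rw [Ordinal.enumOrd]
    exact csInf_mem ⟨b, hbmem⟩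
  exact ⟨hmem.1, fun c hc => hmem.2 c hc⟩

lemma aux_le_enum {κ : Cardinal.{0}} (hreg : κ.IsRegular) {S : Set Ordinal}
    (hsub : S ⊆ Set.Iio κ.ord) (hunb : ∀ β < κ.ord, ∃ b ∈ S, β < b) :
    ∀ α < κ.ord, α ≤ Ordinal.enumOrd S α := by
  intro α
  induction α using Ordinal.induction with
  | h α IH =>
  intro hα
  by_contra h
  push_neg at h
  have h1 : Ordinal.enumOrd S α ≤ Ordinal.enumOrd S (Ordinal.enumOrd S α) :=
    IH _ h (h.trans hα)
  have h2 : Ordinal.enumOrd S (Ordinal.enumOrd S α) < Ordinal.enumOrd S α :=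
    (aux_enum hreg hsub hunb α hα).2 _ h
  exact absurd (h1.trans_lt h2) (lt_irrefl _)

theorem stmt11 (κ : Cardinal.{0}) (hreg : κ.IsRegular) (hκ : Cardinal.aleph0 < κ)
    -- `Bfam` is a κ-almost disjoint family on κ:
    (Bfam : Set (Set Ordinal))
    (hBsub : ∀ C ∈ Bfam, C ⊆ Set.Iio κ.ord)
    (hBcard : ∀ C ∈ Bfam, Cardinal.mk C = Cardinal.lift.{1} κ)
    (hBad : ∀ C ∈ Bfam, ∀ C' ∈ Bfam, C ≠ C' →
      Cardinal.mk ↥(C ∩ C') < Cardinal.lift.{1} κ)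
    -- `(A i : i < κ)` is a sequence of pairwise distinct members of `Bfam`:
    (A : Ordinal → Set Ordinal) (hA : ∀ i < κ.ord, A i ∈ Bfam)
    (hAinj : ∀ i < κ.ord, ∀ j < κ.ord, i ≠ j → A i ≠ A j)
    (istar : Ordinal) (histar : istar < κ.ord)
    (C : Set Ordinal) (hCsub : C ⊆ Set.Iio κ.ord)
    (hC : ∀ i, istar ≤ i → i < κ.ord → Cardinal.mk ↥(C ∩ A i) < Cardinal.lift.{1} κ) :
    -- the set `H` of limit ordinals `δ < κ` closed under `f(i) = sup(A_i ∩ C) + i + 1`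
    -- (for `i*` ≤ `i`) is a club of `κ`, and `F(i,α) ∉ C` whenever `i* ≤ i < α`
    -- and `i, α ∈ H`:
    ∃ H : Set Ordinal,
      H = {δ | δ < κ.ord ∧ Order.IsSuccLimit δ ∧
            ∀ i, istar ≤ i → i < δ → sSup (A i ∩ C) + i + 1 < δ} ∧
      (∀ β < κ.ord, ∃ δ ∈ H, β < δ) ∧
      (∀ X ⊆ H, X.Nonempty → sSup X < κ.ord → sSup X ∈ H) ∧
      (∀ i α, istar ≤ i → i < α → i ∈ H → α ∈ H → Fseq A i α ∉ C) := by
  classical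
  have hord : Order.IsSuccLimit κ.ord := Cardinal.isSuccLimit_ord hreg.1
  have hκ1 : Cardinal.aleph0 ≤ Cardinal.lift.{1} κ := by simpa using hreg.1
  have hsupAC : ∀ i, istar ≤ i → i < κ.ord → sSup (A i ∩ C) < κ.ord := by
    intro i h1 h2
    apply aux_sSup_lt hreg (fun x hx => hCsub hx.2)
    rw [Set.inter_comm]
    exact hC i h1 h2
  refine ⟨_, rfl, ?_, ?_, ?_⟩
  · -- unboundedness
    intro β hβ
    set bfun : Ordinal → Ordinal :=
      fun i => if istar ≤ i then sSup (A i ∩ C) + i + 1 else 0 with hbfun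
    have hbfun_lt : ∀ i < κ.ord, bfun i < κ.ord := by
      intro i hi
      rw [hbfun]
      dsimp only
      split
      · exact aux_add_lt hreg (hsupAC i ‹_› hi) hi
      · exact hord.pos
    set bnd : Ordinal → Ordinal := fun x => sSup (bfun '' Set.Iio x) with hbnd
    have hbnd_lt : ∀ x < κ.ord, bnd x < κ.ord := by
      intro x hx
      apply aux_sSup_lt hreg
      · rintro _ ⟨i, hi, rfl⟩
        exact hbfun_lt i (lt_trans hi hx)
      · exact Cardinal.mk_image_le.trans_lt (by
          rw [Ordinal.mk_Iio_ordinal]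
          exact Cardinal.lift_lt.2 (Cardinal.lt_ord.1 hx))
    set g : ℕ → Ordinal := fun n => Nat.rec (β + 1) (fun _ x => max x (bnd x) + 1) n with hg
    have hgs : ∀ n, g (n + 1) = max (g n) (bnd (g n)) + 1 := fun n => rfl
    have hglt : ∀ n, g n < κ.ord := by
      intro n
      induction n with
      | zero =>
        show β + 1 < κ.ord
        rw [Ordinal.add_one_eq_succ]
        exact hord.succ_lt hβ
      | succ n ih =>
        rw [hgs, Ordinal.add_one_eq_succ]
        exact hord.succ_lt (max_lt ih (hbnd_lt _ ih))
    have hgmono : ∀ n, g n < g (n + 1) := by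
      intro n
      rw [hgs, Ordinal.add_one_eq_succ]
      exact (le_max_left _ _).trans_lt (Order.lt_succ _)
    set δ : Ordinal := ⨆ n, g n with hδ
    have hδlt : δ < κ.ord :=
      Cardinal.iSup_lt_ord_of_isRegular hreg (by simpa using hκ) hglt
    have hgle : ∀ n, g n ≤ δ := fun n => Ordinal.le_iSup g n
    have hltδ : ∀ a, a < δ → ∃ n, a < g n := by
      intro a ha
      rwa [hδ, Ordinal.lt_iSup_iff] at ha
    refine ⟨δ, ⟨hδlt, ⟨?_, Order.isSuccPrelimit_iff_succ_lt.2 ?_⟩, ?_⟩, ?_⟩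
    · intro h0
      have hpos : (0 : Ordinal) < δ :=
        lt_of_lt_of_le (lt_of_le_of_lt (zero_le (a := β))
          (show β < g 0 by
            show β < β + 1
            rw [Ordinal.add_one_eq_succ]; exact Order.lt_succ _)) (hgle 0)
      exact absurd hpos h0.not_lt
    · intro a ha
      obtain ⟨n, hn⟩ := hltδ a ha
      exact lt_of_le_of_lt (Order.succ_le_of_lt hn) ((hgmono n).trans_le (hgle (n + 1)))
    · intro i h1 h2
      obtain ⟨n, hn⟩ := hltδ i h2
      have hval : sSup (A i ∩ C) + i + 1 = bfun i := by rw [hbfun]; simp [h1]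
      have hbddim : BddAbove (bfun '' Set.Iio (g n)) :=
        ⟨κ.ord, fun x hx => by
          obtain ⟨j, hj, rfl⟩ := hx
          exact (hbfun_lt j (lt_trans hj (hglt n))).le⟩
      calc sSup (A i ∩ C) + i + 1 = bfun i := hval
        _ ≤ bnd (g n) := le_csSup hbddim ⟨i, hn, rfl⟩
        _ ≤ max (g n) (bnd (g n)) := le_max_right _ _
        _ < g (n + 1) := by rw [hgs, Ordinal.add_one_eq_succ]; exact Order.lt_succ _
        _ ≤ δ := hgle (n + 1)
    · calc β < β + 1 := by rw [Ordinal.add_one_eq_succ]; exact Order.lt_succ _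
        _ = g 0 := rfl
        _ ≤ δ := hgle 0
  · -- closedness
    intro X hX hne hlt
    have hup : ∀ a, a < sSup X → ∃ x ∈ X, a < x := fun a ha =>
      exists_lt_of_lt_csSup hne ha
    have hbddX : BddAbove X := ⟨κ.ord, fun x hx => ((hX hx).1).le⟩
    refine ⟨hlt, ⟨?_, Order.isSuccPrelimit_iff_succ_lt.2 ?_⟩, ?_⟩
    · intro h0
      obtain ⟨x, hx⟩ := hne
      have hxpos : (0 : Ordinal) < x := (hX hx).2.1.pos
      have := le_csSup hbddX hx
      exact absurd (hxpos.trans_le this) h0.not_lt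
    · intro a ha
      obtain ⟨x, hxX, hax⟩ := hup a ha
      exact lt_of_lt_of_le ((hX hxX).2.1.succ_lt hax) (le_csSup hbddX hxX)
    · intro i h1 h2
      obtain ⟨x, hxX, hix⟩ := hup i h2
      exact lt_of_lt_of_le ((hX hxX).2.2 i h1 hix) (le_csSup hbddX hxX)
  · -- main property
    intro i α h1 h2 hiH hαH hmemC
    have hiκ : i < κ.ord := hiH.1
    have hακ : α < κ.ord := hαH.1
    set S : Set Ordinal := A i \ ⋃ j < i, A j with hS
    have hSsub : S ⊆ Set.Iio κ.ord := fun x hx => hBsub _ (hA i hiκ) hx.1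
    have hUcard : Cardinal.mk ↥(A i ∩ ⋃ j < i, A j) < Cardinal.lift.{1} κ := by
      have hsub : (A i ∩ ⋃ j < i, A j) ⊆ ⋃ (j : ↥(Set.Iio i)), (A i ∩ A j) := by
        rintro b ⟨hb1, hb2⟩
        simp only [Set.mem_iUnion] at hb2 ⊢
        obtain ⟨j, hj, hbj⟩ := hb2
        exact ⟨⟨j, hj⟩, hb1, hbj⟩
      refine (Cardinal.mk_le_mk_of_subset hsub).trans_lt ?_
      refine (Cardinal.mk_iUnion_le _).trans_lt ?_
      have hιcard : Cardinal.mk ↥(Set.Iio i) < Cardinal.lift.{1} κ := by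
        rw [Ordinal.mk_Iio_ordinal]
        exact Cardinal.lift_lt.2 (Cardinal.lt_ord.1 hiκ)
      refine Cardinal.mul_lt_of_lt hκ1 hιcard ?_
      refine Cardinal.iSup_lt_of_isRegular (aux_isRegular_lift hreg) hιcard ?_
      rintro ⟨j, hj⟩
      exact hBad _ (hA i hiκ) _ (hA j (hj.trans hiκ)) (hAinj i hiκ j (hj.trans hiκ) (ne_of_gt hj))
    have hSunb : ∀ β < κ.ord, ∃ b ∈ S, β < b := by
      intro β hβ
      obtain ⟨b, ⟨hb1, hb2⟩, hb3⟩ :=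
        aux_unbounded_of hreg (hBsub _ (hA i hiκ)) (hBcard _ (hA i hiκ)) hUcard β hβ
      exact ⟨b, ⟨hb1, fun hmem => hb2 ⟨hb1, hmem⟩⟩, hb3⟩
    have hmemS : Ordinal.enumOrd S α ∈ S := (aux_enum hreg hSsub hSunb α hακ).1
    have hge : α ≤ Ordinal.enumOrd S α := aux_le_enum hreg hSsub hSunb α hακ
    have hclose : sSup (A i ∩ C) + i + 1 < α := hαH.2.2 i h1 h2
    have hACmem : Ordinal.enumOrd S α ∈ A i ∩ C := ⟨hmemS.1, hmemC⟩
    have hle : Ordinal.enumOrd S α ≤ sSup (A i ∩ C) :=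
      le_csSup ⟨κ.ord, fun x hx => (hBsub _ (hA i hiκ) hx.1).le⟩ hACmem
    have h3 : sSup (A i ∩ C) < α := by
      refine lt_of_le_of_lt ?_ hclose
      calc sSup (A i ∩ C) ≤ sSup (A i ∩ C) + i := le_self_add
        _ ≤ sSup (A i ∩ C) + i + 1 := le_self_add
    exact absurd ((h3.trans_le hge).trans_le hle) (lt_irrefl _)
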